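/- arXiv:2410.03239 — 3 statements merged into one kernel-verified Lean document; each statement's English description precedes it below -/
import Mathlib

section
/- Let γ > 0, c ∈ ℝ and α₀₁ ≠ 0, and write G(u) = G(u; γ, c). If real numbers λ₀, λ₁, λ₂, λ₃ satisfy λ₀·1 + λ₁·G(u) + λ₂·α₀₁·(u − c)·G(u)·(1 − G(u)) + λ₃·(−α₀₁·γ)·G(u)·(1 − G(u)) = 0 for every u ∈ ℝ, then λ₀ = λ₁ = λ₂ = λ₃ = 0. In other words, the four partial derivatives of the intercept α₀(u) = α₀ + α₀₁·G(u; γ, c) with respect to the parameters (α₀, α₀₁, γ, c) are linearly independent functions of u. -/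
open Filter Topology Real

noncomputable def G (γ c u : ℝ) : ℝ := (1 + Real.exp (-γ * (u - c)))⁻¹

lemma G_pos (γ c u : ℝ) : 0 < G γ c u := by unfold G; positivity

lemma G_lt_one (γ c u : ℝ) : G γ c u < 1 := by
  unfold G
  rw [inv_lt_one_iff₀]
  right
  linarith [Real.exp_pos (-γ * (u - c))]

lemma denom_ne (γ c u : ℝ) : 1 + Real.exp (-γ * (u - c)) ≠ 0 := by
  positivity

lemma tendsto_lin_atBot (γ c : ℝ) (hγ : 0 < γ) :
    Tendsto (fun u : ℝ => -γ * (u - c)) atTop atBot := by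
  have : Tendsto (fun u : ℝ => u - c) atTop atTop := tendsto_atTop_add_const_right _ _ tendsto_id
  exact this.const_mul_atTop_of_neg (by linarith)

lemma tendsto_lin_atTop (γ c : ℝ) (hγ : 0 < γ) :
    Tendsto (fun u : ℝ => -γ * (u - c)) atBot atTop := by
  have : Tendsto (fun u : ℝ => u - c) atBot atBot := tendsto_atBot_add_const_right _ _ tendsto_id
  exact this.const_mul_atBot_of_neg (by linarith)

lemma tendsto_G_atTop (γ c : ℝ) (hγ : 0 < γ) :
    Tendsto (fun u => G γ c u) atTop (𝓝 1) := by
  have h1 : Tendsto (fun u : ℝ => Real.exp (-γ * (u - c))) atTop (𝓝 0) :=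
    Real.tendsto_exp_atBot.comp (tendsto_lin_atBot γ c hγ)
  have h2 : Tendsto (fun u : ℝ => 1 + Real.exp (-γ * (u - c))) atTop (𝓝 1) := by
    simpa using (tendsto_const_nhds.add h1)
  have := h2.inv₀ (by norm_num)
  simpa [G] using this

lemma tendsto_G_atBot (γ c : ℝ) (hγ : 0 < γ) :
    Tendsto (fun u => G γ c u) atBot (𝓝 0) := by
  have h1 : Tendsto (fun u : ℝ => Real.exp (-γ * (u - c))) atBot atTop :=
    Real.tendsto_exp_atTop.comp (tendsto_lin_atTop γ c hγ)
  have h2 : Tendsto (fun u : ℝ => 1 + Real.exp (-γ * (u - c))) atBot atTop :=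
    tendsto_atTop_add_const_left _ _ h1
  exact h2.inv_tendsto_atTop

lemma oneSubG (γ c u : ℝ) :
    1 - G γ c u = Real.exp (-γ * (u - c)) * G γ c u := by
  have := denom_ne γ c u
  unfold G
  field_simp
  ring

lemma Gid (γ c u : ℝ) :
    G γ c u = Real.exp (γ * (u - c)) * (1 - G γ c u) := by
  rw [oneSubG, ← mul_assoc, ← Real.exp_add]
  norm_num

lemma prod_id_top (γ c : ℝ) (hγ : 0 < γ) (u : ℝ) :
    (u - c) * G γ c u * (1 - G γ c u)
      = γ⁻¹ * ((γ * (u - c)) * Real.exp (-(γ * (u - c)))) * (G γ c u * G γ c u) := by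
  have ht : γ⁻¹ * (γ * (u - c)) = u - c := by field_simp
  have hE := oneSubG γ c u
  have hneg : -(γ * (u - c)) = -γ * (u - c) := by ring
  calc (u - c) * G γ c u * (1 - G γ c u)
      = (γ⁻¹ * (γ * (u - c))) * G γ c u * (Real.exp (-γ * (u - c)) * G γ c u) := by
        rw [ht, ← hE]
    _ = γ⁻¹ * ((γ * (u - c)) * Real.exp (-(γ * (u - c)))) * (G γ c u * G γ c u) := by
        rw [hneg]; ring

lemma prod_id_bot (γ c : ℝ) (hγ : 0 < γ) (u : ℝ) :
    (u - c) * G γ c u * (1 - G γ c u)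
      = γ⁻¹ * (-(-(γ * (u - c))) * Real.exp (-(-(γ * (u - c))))) * ((1 - G γ c u) * (1 - G γ c u)) := by
  simp only [neg_neg]
  have ht : γ⁻¹ * (γ * (u - c)) = u - c := by field_simp
  have hE := Gid γ c u
  calc (u - c) * G γ c u * (1 - G γ c u)
      = (γ⁻¹ * (γ * (u - c))) * (Real.exp (γ * (u - c)) * (1 - G γ c u)) * (1 - G γ c u) := by
        rw [ht, ← hE]
    _ = γ⁻¹ * (γ * (u - c) * Real.exp (γ * (u - c))) * ((1 - G γ c u) * (1 - G γ c u)) := by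
        ring

lemma tendsto_xexp : Tendsto (fun x : ℝ => x * Real.exp (-x)) atTop (𝓝 0) := by
  simpa using Real.tendsto_pow_mul_exp_neg_atTop_nhds_zero 1

lemma tendsto_P_atTop (γ c : ℝ) (hγ : 0 < γ) :
    Tendsto (fun u => (u - c) * G γ c u * (1 - G γ c u)) atTop (𝓝 0) := by
  have h1 : Tendsto (fun u : ℝ => γ * (u - c)) atTop atTop := by
    have := tendsto_lin_atTop γ c hγ
    have h : Tendsto (fun u : ℝ => u - c) atTop atTop := tendsto_atTop_add_const_right _ _ tendsto_id
    exact h.const_mul_atTop hγ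
  have h2 : Tendsto (fun u : ℝ => (γ * (u - c)) * Real.exp (-(γ * (u - c)))) atTop (𝓝 0) :=
    tendsto_xexp.comp h1
  have hg := tendsto_G_atTop γ c hγ
  have h3 : Tendsto (fun u => γ⁻¹ * ((γ * (u - c)) * Real.exp (-(γ * (u - c)))) * (G γ c u * G γ c u)) atTop (𝓝 (γ⁻¹ * 0 * (1 * 1))) :=
    ((tendsto_const_nhds.mul h2).mul (hg.mul hg))
  have h4 : (γ⁻¹ * 0 * (1 * 1) : ℝ) = 0 := by ring
  rw [h4] at h3
  exact h3.congr (fun u => (prod_id_top γ c hγ u).symm)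

lemma tendsto_P_atBot (γ c : ℝ) (hγ : 0 < γ) :
    Tendsto (fun u => (u - c) * G γ c u * (1 - G γ c u)) atBot (𝓝 0) := by
  have h1 : Tendsto (fun u : ℝ => -(γ * (u - c))) atBot atTop := by
    have h : Tendsto (fun u : ℝ => u - c) atBot atBot := tendsto_atBot_add_const_right _ _ tendsto_id
    have := h.const_mul_atBot hγ
    exact tendsto_neg_atBot_atTop.comp this
  have h2 : Tendsto (fun u : ℝ => (-(γ * (u - c))) * Real.exp (-(-(γ * (u - c))))) atBot (𝓝 0) :=
    tendsto_xexp.comp h1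
  have hg := tendsto_G_atBot γ c hγ
  have hg1 : Tendsto (fun u => 1 - G γ c u) atBot (𝓝 1) := by
    simpa using tendsto_const_nhds.sub hg
  have h3 : Tendsto (fun u => γ⁻¹ * (-(-(γ * (u - c))) * Real.exp (-(-(γ * (u - c))))) * ((1 - G γ c u) * (1 - G γ c u))) atBot (𝓝 (γ⁻¹ * (-0) * (1 * 1))) := by
    have h2' : Tendsto (fun u : ℝ => -(-(γ * (u - c))) * Real.exp (-(-(γ * (u - c))))) atBot (𝓝 (-0)) := by
      have := h2.neg
      refine this.congr fun u => by ring
    exact (tendsto_const_nhds.mul h2').mul (hg1.mul hg1)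
  have h4 : (γ⁻¹ * (-0) * (1 * 1) : ℝ) = 0 := by ring
  rw [h4] at h3
  exact h3.congr (fun u => (prod_id_bot γ c hγ u).symm)

/-- The four partial derivatives `1`, `G(u)`, `α₀₁·(u − c)·G(u)·(1 − G(u))` and
`−α₀₁·γ·G(u)·(1 − G(u))` of the intercept `α₀(u) = α₀ + α₀₁·G(u; γ, c)` with respect to
the parameters `(α₀, α₀₁, γ, c)` are linearly independent functions of `u`. -/
theorem stmt10 (γ c α₀₁ : ℝ) (hγ : 0 < γ) (hα : α₀₁ ≠ 0) (l0 l1 l2 l3 : ℝ)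
    (h : ∀ u : ℝ,
      l0 * 1 + l1 * G γ c u + l2 * (α₀₁ * (u - c) * G γ c u * (1 - G γ c u)) +
        l3 * (-(α₀₁ * γ) * G γ c u * (1 - G γ c u)) = 0) :
    l0 = 0 ∧ l1 = 0 ∧ l2 = 0 ∧ l3 = 0 := by
  have hGt := tendsto_G_atTop γ c hγ
  have hGb := tendsto_G_atBot γ c hγ
  have hPt := tendsto_P_atTop γ c hγ
  have hPb := tendsto_P_atBot γ c hγ
  have hQt : Tendsto (fun u => G γ c u * (1 - G γ c u)) atTop (𝓝 0) := by
    have h1 : Tendsto (fun u => 1 - G γ c u) atTop (𝓝 (1 - 1)) :=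
      Tendsto.sub (tendsto_const_nhds : Tendsto (fun _ : ℝ => (1:ℝ)) atTop (𝓝 1)) hGt
    have := hGt.mul h1
    simpa using this
  have hQb : Tendsto (fun u => G γ c u * (1 - G γ c u)) atBot (𝓝 0) := by
    have h1 : Tendsto (fun u => 1 - G γ c u) atBot (𝓝 (1 - 0)) :=
      Tendsto.sub (tendsto_const_nhds : Tendsto (fun _ : ℝ => (1:ℝ)) atBot (𝓝 1)) hGb
    have := hGb.mul h1
    simpa using this
  -- expression as function
  have hfun : ∀ u : ℝ, l0 * 1 + l1 * G γ c u + l2 * α₀₁ * ((u - c) * G γ c u * (1 - G γ c u)) +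
        l3 * (-(α₀₁ * γ)) * (G γ c u * (1 - G γ c u)) = 0 := by
    intro u
    have := h u
    linarith [h u, (by ring :
      l0 * 1 + l1 * G γ c u + l2 * (α₀₁ * (u - c) * G γ c u * (1 - G γ c u)) +
        l3 * (-(α₀₁ * γ) * G γ c u * (1 - G γ c u)) =
      l0 * 1 + l1 * G γ c u + l2 * α₀₁ * ((u - c) * G γ c u * (1 - G γ c u)) +
        l3 * (-(α₀₁ * γ)) * (G γ c u * (1 - G γ c u)))]
  have hbot : Tendsto (fun u => l0 * 1 + l1 * G γ c u + l2 * α₀₁ * ((u - c) * G γ c u * (1 - G γ c u)) +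
        l3 * (-(α₀₁ * γ)) * (G γ c u * (1 - G γ c u))) atBot
      (𝓝 (l0 * 1 + l1 * 0 + l2 * α₀₁ * 0 + l3 * (-(α₀₁ * γ)) * 0)) := by
    exact ((((tendsto_const_nhds.add (tendsto_const_nhds.mul hGb)).add
      (tendsto_const_nhds.mul hPb)).add (tendsto_const_nhds.mul hQb)))
  have hl0 : l0 = 0 := by
    have h0 : Tendsto (fun u : ℝ => (0:ℝ)) atBot (𝓝 (l0 * 1 + l1 * 0 + l2 * α₀₁ * 0 + l3 * (-(α₀₁ * γ)) * 0)) := by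
      exact hbot.congr fun u => hfun u
    have := tendsto_nhds_unique h0 tendsto_const_nhds
    linarith
  have htop : Tendsto (fun u => l0 * 1 + l1 * G γ c u + l2 * α₀₁ * ((u - c) * G γ c u * (1 - G γ c u)) +
        l3 * (-(α₀₁ * γ)) * (G γ c u * (1 - G γ c u))) atTop
      (𝓝 (l0 * 1 + l1 * 1 + l2 * α₀₁ * 0 + l3 * (-(α₀₁ * γ)) * 0)) := by
    exact ((((tendsto_const_nhds.add (tendsto_const_nhds.mul hGt)).add
      (tendsto_const_nhds.mul hPt)).add (tendsto_const_nhds.mul hQt)))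
  have hl1 : l1 = 0 := by
    have h0 : Tendsto (fun u : ℝ => (0:ℝ)) atTop (𝓝 (l0 * 1 + l1 * 1 + l2 * α₀₁ * 0 + l3 * (-(α₀₁ * γ)) * 0)) :=
      htop.congr fun u => hfun u
    have := tendsto_nhds_unique h0 tendsto_const_nhds
    linarith
  -- now plug u = c and u = c + 1
  have hGc : G γ c c = 1/2 := by
    unfold G; norm_num
  have hc := h c
  rw [hGc, hl0, hl1] at hc
  have hl3 : l3 = 0 := by
    have hX : l3 * (-(α₀₁ * γ) * (1/2) * (1 - 1/2)) = 0 := by linear_combination hc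
    rcases mul_eq_zero.mp hX with h' | h'
    · exact h'
    · exfalso
      have hag : α₀₁ * γ = 0 := by linarith
      exact hα ((mul_eq_zero.mp hag).resolve_right hγ.ne')
  have hc1 := h (c + 1)
  rw [hl0, hl1, hl3] at hc1
  have hGpos := G_pos γ c (c+1)
  have hGlt := G_lt_one γ c (c+1)
  have hl2 : l2 = 0 := by
    have hX : l2 * (α₀₁ * (G γ c (c+1) * (1 - G γ c (c+1)))) = 0 := by
      linear_combination hc1
    rcases mul_eq_zero.mp hX with h' | h'
    · exact h'
    · exfalso
      rcases mul_eq_zero.mp h' with h'' | h''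
      · exact hα h''
      · nlinarith
  exact ⟨hl0, hl1, hl2, hl3⟩
end

section
/- Let γ > 0, c ∈ ℝ and write G(u) = G(u; γ, c). If the function f(u) = b₁·(u − c)·G(u)·(1 − G(u)) + b₂·G(u)·(1 − G(u)) is constant on ℝ, then b₁ = b₂ = 0. -/
/-- If `f(u) = b₁·(u − c)·G(u)·(1 − G(u)) + b₂·G(u)·(1 − G(u))` is constant on `ℝ`,
then `b₁ = b₂ = 0`. -/
theorem stmt11 (γ c b₁ b₂ : ℝ) (hγ : 0 < γ)
    (hconst : ∀ u v : ℝ,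
      b₁ * (u - c) * G γ c u * (1 - G γ c u) + b₂ * (G γ c u * (1 - G γ c u)) =
        b₁ * (v - c) * G γ c v * (1 - G γ c v) + b₂ * (G γ c v * (1 - G γ c v))) :
    b₁ = 0 ∧ b₂ = 0 := by
  set x := Real.exp (-γ) with hxdef
  have hx : 0 < x := Real.exp_pos _
  have hx1 : x < 1 := by
    rw [hxdef]
    calc Real.exp (-γ) < Real.exp 0 := Real.exp_lt_exp.mpr (by linarith)
    _ = 1 := Real.exp_zero
  have e1 : -γ * ((c + 1) - c) = -γ := by ring
  have h1 : G γ c (c + 1) = (1 + x)⁻¹ := by rw [G, e1]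
  have e2 : -γ * ((c - 1) - c) = γ := by ring
  have h2 : G γ c (c - 1) = (1 + x⁻¹)⁻¹ := by
    have hexp : Real.exp γ = x⁻¹ := by rw [hxdef, Real.exp_neg, inv_inv]
    rw [G, e2, hexp]
  have h0 : G γ c c = 2⁻¹ := by
    rw [G]
    norm_num
  have hA := hconst (c + 1) (c - 1)
  have hB := hconst (c + 1) c
  rw [h1, h2] at hA
  rw [h1, h0] at hB
  have hne : (1 : ℝ) + x ≠ 0 := by positivity
  have hne' : (1 : ℝ) + x⁻¹ ≠ 0 := by positivity
  have hb1 : b₁ = 0 := by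
    field_simp at hA
    have key : b₁ * (2 * x * (x + 1) ^ 4) = 0 := by linear_combination (x + 1) ^ 2 * hA
    rcases mul_eq_zero.mp key with h | h
    · exact h
    · exfalso; nlinarith [pow_pos (by linarith : (0:ℝ) < x + 1) 4]
  have hb2 : b₂ = 0 := by
    subst hb1
    field_simp at hB
    have key : b₂ * (1 - x) ^ 2 = 0 := by linear_combination -hB
    rcases mul_eq_zero.mp key with h | h
    · exact h
    · exfalso; nlinarith
  exact ⟨hb1, hb2⟩
end

section
/- Let γ > 0, c ∈ ℝ, b₁ ≠ 0, b₂ ∈ ℝ and write G(u) = G(u; γ, c). Then the function f(u) = b₁·(u − c)·G(u)·(1 − G(u)) + b₂·G(u)·(1 − G(u)) is not monotone on ℝ (i.e., it is neither monotonically nondecreasing nor monotonically nonincreasing on ℝ). -/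
open Real Filter Topology

lemma aux_tendsto (A B γ : ℝ) (hγ : 0 < γ) :
    Tendsto (fun x : ℝ => (A * x + B) * Real.exp (-(γ * x))) atTop (𝓝 0) := by
  have h1 : Tendsto (fun x : ℝ => γ * x) atTop atTop :=
    Tendsto.const_mul_atTop hγ tendsto_id
  have hx : Tendsto (fun y : ℝ => y * Real.exp (-y)) atTop (𝓝 0) := by
    simpa using Real.tendsto_pow_mul_exp_neg_atTop_nhds_zero 1
  have he : Tendsto (fun y : ℝ => Real.exp (-y)) atTop (𝓝 0) :=
    Real.tendsto_exp_neg_atTop_nhds_zero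
  have h2 : Tendsto (fun y : ℝ => (A / γ * y + B) * Real.exp (-y)) atTop (𝓝 0) := by
    have := (hx.const_mul (A / γ)).add (he.const_mul B)
    simp only [mul_zero, add_zero] at this
    convert this using 2 with y
    ring
  have h3 := h2.comp h1
  convert h3 using 2 with x
  simp only [Function.comp]
  field_simp


/-- If `b₁ ≠ 0`, the function `f(u) = b₁·(u − c)·G(u)·(1 − G(u)) + b₂·G(u)·(1 − G(u))`
is not monotone on `ℝ`: it is neither monotonically nondecreasing nor monotonically
nonincreasing. -/
theorem stmt12 (γ c b₁ b₂ : ℝ) (hγ : 0 < γ) (hb : b₁ ≠ 0) :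
    ¬ (Monotone (fun u : ℝ =>
          b₁ * (u - c) * G γ c u * (1 - G γ c u) + b₂ * (G γ c u * (1 - G γ c u))) ∨
       Antitone (fun u : ℝ =>
          b₁ * (u - c) * G γ c u * (1 - G γ c u) + b₂ * (G γ c u * (1 - G γ c u)))) := by
  set f : ℝ → ℝ := fun u =>
      b₁ * (u - c) * G γ c u * (1 - G γ c u) + b₂ * (G γ c u * (1 - G γ c u)) with hf
  -- basic facts about G
  have hGpos : ∀ u : ℝ, 0 < G γ c u := by
    intro u
    have : (0:ℝ) < 1 + Real.exp (-γ * (u - c)) := by positivity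
    exact inv_pos.mpr this
  have hGlt : ∀ u : ℝ, G γ c u < 1 := by
    intro u
    rw [G]
    have h1 : (1:ℝ) < 1 + Real.exp (-γ * (u - c)) := by
      have := Real.exp_pos (-γ * (u - c)); linarith
    rw [inv_lt_one_iff₀]; right; exact h1
  have h1G : ∀ u : ℝ, 1 - G γ c u = Real.exp (-γ * (u - c)) * G γ c u := by
    intro u
    rw [G]
    have h0 : (1:ℝ) + Real.exp (-γ * (u - c)) ≠ 0 := by positivity
    field_simp
    ring
  have hfeq : ∀ u : ℝ, f u = (b₁ * (u - c) + b₂) * (G γ c u * (1 - G γ c u)) := by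
    intro u; rw [hf]; ring
  have hHpos : ∀ u : ℝ, 0 < G γ c u * (1 - G γ c u) := by
    intro u
    have := hGpos u; have := hGlt u
    have : 0 < 1 - G γ c u := by linarith
    positivity
  have hHle1 : ∀ u : ℝ, G γ c u * (1 - G γ c u) ≤ Real.exp (-(γ * (u - c))) := by
    intro u
    have h1 := hGpos u; have h2 := hGlt u
    have : G γ c u * (1 - G γ c u) ≤ 1 - G γ c u := by nlinarith
    calc G γ c u * (1 - G γ c u) ≤ 1 - G γ c u := this
      _ = Real.exp (-γ * (u - c)) * G γ c u := h1G u
      _ ≤ Real.exp (-γ * (u - c)) * 1 := by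
          exact mul_le_mul_of_nonneg_left (le_of_lt h2) (Real.exp_pos _).le
      _ = Real.exp (-(γ * (u - c))) := by rw [mul_one]; ring_nf
  have hHle2 : ∀ u : ℝ, G γ c u * (1 - G γ c u) ≤ Real.exp (γ * (u - c)) := by
    intro u
    have h1 := hGpos u; have h2 := hGlt u
    have hG : G γ c u ≤ Real.exp (γ * (u - c)) := by
      rw [G]
      rw [inv_le_iff_one_le_mul₀ (by positivity)]
      have he : Real.exp (-γ * (u - c)) * Real.exp (γ * (u - c)) = 1 := by
        rw [← Real.exp_add]; ring_nf; exact Real.exp_zero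
      nlinarith [Real.exp_pos (γ * (u - c))]
    nlinarith
  -- tendsto at +∞
  have htop : Tendsto f atTop (𝓝 0) := by
    apply squeeze_zero_norm'
      (a := fun u => (|b₁| * (u - c) + |b₂|) * Real.exp (-(γ * (u - c))))
    · filter_upwards [eventually_ge_atTop c] with u hu
      rw [hfeq]
      rw [Real.norm_eq_abs, abs_mul, abs_of_pos (hHpos u)]
      have habs2 : |u - c| = u - c := abs_of_nonneg (by linarith)
      have habs : |b₁ * (u - c) + b₂| ≤ |b₁| * (u - c) + |b₂| := by
        calc |b₁ * (u - c) + b₂| ≤ |b₁ * (u - c)| + |b₂| := abs_add_le _ _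
          _ = |b₁| * (u - c) + |b₂| := by rw [abs_mul, habs2]
      have hnn : 0 ≤ |b₁| * (u - c) + |b₂| := by
        have h0 : (0:ℝ) ≤ u - c := by linarith
        positivity
      exact mul_le_mul habs (hHle1 u) (hHpos u).le hnn
    · have := (aux_tendsto |b₁| |b₂| γ hγ).comp
        (tendsto_atTop_add_const_right atTop (-c) tendsto_id)
      simpa [Function.comp_def, sub_eq_add_neg] using this
  -- tendsto at -∞
  have hbot : Tendsto f atBot (𝓝 0) := by
    apply squeeze_zero_norm'
      (a := fun u => (|b₁| * (c - u) + |b₂|) * Real.exp (-(γ * (c - u))))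
    · filter_upwards [eventually_le_atBot c] with u hu
      rw [hfeq]
      rw [Real.norm_eq_abs, abs_mul, abs_of_pos (hHpos u)]
      have hb2 : G γ c u * (1 - G γ c u) ≤ Real.exp (-(γ * (c - u))) := by
        have := hHle2 u
        convert this using 2
        ring
      have habs2 : |u - c| = c - u := by
        rw [abs_sub_comm]; exact abs_of_nonneg (by linarith)
      have habs : |b₁ * (u - c) + b₂| ≤ |b₁| * (c - u) + |b₂| := by
        calc |b₁ * (u - c) + b₂| ≤ |b₁ * (u - c)| + |b₂| := abs_add_le _ _
          _ = |b₁| * (c - u) + |b₂| := by rw [abs_mul, habs2]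
      have hnn : 0 ≤ |b₁| * (c - u) + |b₂| := by
        have h0 : (0:ℝ) ≤ c - u := by linarith
        positivity
      exact mul_le_mul habs hb2 (hHpos u).le hnn
    · have hcomp : Tendsto (fun u : ℝ => c - u) atBot atTop := by
        exact tendsto_atTop_add_const_left atBot c tendsto_neg_atBot_atTop
      have := (aux_tendsto |b₁| |b₂| γ hγ).comp hcomp
      simpa [Function.comp_def] using this
  -- positivity at a witness point
  set u₀ : ℝ := c + (1 - b₂) / b₁ with hu₀
  have hfu₀ : 0 < f u₀ := by
    rw [hfeq]
    have : b₁ * (u₀ - c) + b₂ = 1 := by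
      rw [hu₀]; field_simp; ring
    rw [this, one_mul]
    exact hHpos u₀
  rintro (hm | ha)
  · have h1 : ∀ᶠ u in atTop, f u₀ ≤ f u :=
      (eventually_ge_atTop u₀).mono fun u hu => hm hu
    have := ge_of_tendsto htop h1
    linarith
  · have h1 : ∀ᶠ u in atBot, f u₀ ≤ f u :=
      (eventually_le_atBot u₀).mono fun u hu => ha hu
    have := ge_of_tendsto hbot h1
    linarith
end
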